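/- For every real c with 0 < c < 1, the function m ↦ Γ(m − c) Γ(m + c) / Γ(m)² is nonincreasing on the interval (c, ∞), where Γ denotes the Euler gamma function. -/

import Mathlib

open Real Set
open Filter Topology

lemma prod_form (c x : ℝ) (hc : 0 < c) (hx : c < x) {n : ℕ} (hn : 1 ≤ n) :
    Real.GammaSeq (x - c) n * Real.GammaSeq (x + c) n / (Real.GammaSeq x n) ^ 2
      = ∏ j ∈ Finset.range (n + 1), (x + j) ^ 2 / ((x - c + j) * (x + c + j)) := by
  have hx0 : 0 < x := hc.trans hx
  have hxc : 0 < x - c := sub_pos.mpr hx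
  have hn0 : (0:ℝ) < n := by exact_mod_cast hn
  have hA : 0 < ∏ j ∈ Finset.range (n + 1), (x - c + (j:ℝ)) :=
    Finset.prod_pos fun j _ => by positivity
  have hB : 0 < ∏ j ∈ Finset.range (n + 1), (x + c + (j:ℝ)) :=
    Finset.prod_pos fun j _ => by positivity
  have hC : 0 < ∏ j ∈ Finset.range (n + 1), (x + (j:ℝ)) :=
    Finset.prod_pos fun j _ => by positivity
  have hf : (0:ℝ) < ((Nat.factorial n : ℕ) : ℝ) := by positivity
  have hr : (0:ℝ) < (n:ℝ) ^ x := rpow_pos_of_pos hn0 x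
  have key : (n:ℝ) ^ (x - c) * (n:ℝ) ^ (x + c) = ((n:ℝ) ^ x) ^ 2 := by
    rw [sq, ← Real.rpow_add hn0, ← Real.rpow_add hn0]; ring_nf
  rw [Real.GammaSeq, Real.GammaSeq, Real.GammaSeq, Finset.prod_div_distrib,
    Finset.prod_pow, Finset.prod_mul_distrib]
  rw [div_eq_div_iff (by positivity) (by positivity)]
  field_simp
  ring_nf
  linear_combination key

/-- For `0 < c < 1`, the function `m ↦ Γ(m - c) Γ(m + c) / Γ(m)²` is nonincreasing on `(c, ∞)`. -/
theorem gamma_ratio_antitone (c : ℝ) (hc0 : 0 < c) (hc1 : c < 1) :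
    AntitoneOn (fun m : ℝ => Gamma (m - c) * Gamma (m + c) / Gamma m ^ 2) (Ioi c) := by
  intro x hx y hy hxy
  simp only
  have hx' : c < x := hx
  have hy' : c < y := hy
  have T : ∀ z : ℝ, c < z →
      Tendsto (fun n => Real.GammaSeq (z - c) n * Real.GammaSeq (z + c) n /
        (Real.GammaSeq z n) ^ 2) atTop (𝓝 (Gamma (z - c) * Gamma (z + c) / Gamma z ^ 2)) := by
    intro z hz
    have hzpos : 0 < z := hc0.trans hz
    have hG : Gamma z ^ 2 ≠ 0 := by
      have := Real.Gamma_pos_of_pos hzpos; positivity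
    exact (((Real.GammaSeq_tendsto_Gamma (z - c)).mul
      (Real.GammaSeq_tendsto_Gamma (z + c))).div
      ((Real.GammaSeq_tendsto_Gamma z).pow 2) hG)
  refine le_of_tendsto_of_tendsto (T y hy') (T x hx') ?_
  filter_upwards [eventually_ge_atTop 1] with n hn
  rw [prod_form c x hc0 hx' hn, prod_form c y hc0 hy' hn]
  apply Finset.prod_le_prod
  · intro j _
    have h1 : 0 < y - c + (j:ℝ) := by have := sub_pos.mpr hy'; positivity
    have h2 : 0 < y + c + (j:ℝ) := by have := hc0.trans hy'; positivity
    positivity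
  · intro j _
    have hxc : 0 < x - c + (j:ℝ) := by have := sub_pos.mpr hx'; positivity
    have hxc2 : 0 < x + c + (j:ℝ) := by have := hc0.trans hx'; positivity
    have hyc : 0 < y - c + (j:ℝ) := by have := sub_pos.mpr hy'; positivity
    have hyc2 : 0 < y + c + (j:ℝ) := by have := hc0.trans hy'; positivity
    rw [div_le_div_iff₀ (by positivity) (by positivity)]
    have hsq : (x + (j:ℝ)) ^ 2 ≤ (y + (j:ℝ)) ^ 2 := by nlinarith [hc0.trans hx']
    nlinarith [mul_le_mul_of_nonneg_left hsq (sq_nonneg c)]
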